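/- Let d ≥ 2 and let w₀,...,w_d be unit vectors in ℝ^d forming the vertices of a d-simplex containing 0 in its interior, so Σ aᵢwᵢ = 0 for some aᵢ > 0. If wᵢ · wⱼ ≥ -1/d for all 1 ≤ i < j ≤ d, then w₀ · w₁ ≤ -1/d, where a₀ = minᵢ aᵢ and a₁ = maxᵢ aᵢ. -/

import Mathlib

open scoped RealInnerProductSpace

/-- Key induction step: unit vectors `w₀,...,w_d` in `ℝ^d` form a simplex with `0` in the
interior of its convex hull, `∑ aᵢ wᵢ = 0` with `aᵢ > 0`, `a₀` minimal and `a₁` maximal.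
If `wᵢ · wⱼ ≥ -1/d` for all `1 ≤ i < j ≤ d`, then `w₀ · w₁ ≤ -1/d`. -/
theorem inner_w0_w1_le
    (d : ℕ) (hd : 2 ≤ d)
    (w : Fin (d + 1) → EuclideanSpace ℝ (Fin d))
    (hunit : ∀ i, ‖w i‖ = 1)
    (hindep : AffineIndependent ℝ w)
    (h0 : (0 : EuclideanSpace ℝ (Fin d)) ∈ interior (convexHull ℝ (Set.range w)))
    (a : Fin (d + 1) → ℝ)
    (ha : ∀ i, 0 < a i)
    (hsum : ∑ i, a i • w i = 0)
    (hmin : ∀ i, a 0 ≤ a i)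
    (hmax : ∀ i, a i ≤ a 1)
    (hge : ∀ i j : Fin (d + 1), i ≠ 0 → j ≠ 0 → i < j →
      -(1 / (d : ℝ)) ≤ ⟪w i, w j⟫) :
    ⟪w 0, w 1⟫ ≤ -(1 / (d : ℝ)) := by
  have hd0 : (0:ℝ) < (d:ℝ) := by
    have : 0 < d := by omega
    exact_mod_cast this
  have hv1 : ((1 : Fin (d+1)) : ℕ) = 1 := by
    simp [Fin.val_one']
    omega
  have h01 : (0 : Fin (d+1)) ≠ 1 := by
    intro h
    have := congrArg Fin.val h
    simp [hv1] at this
    omega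
  have key : ∑ i, a i * ⟪w i, w 1⟫ = 0 := by
    have h := congrArg (fun v : EuclideanSpace ℝ (Fin d) => (inner ℝ v (w 1) : ℝ)) hsum
    simp only [sum_inner, real_inner_smul_left, inner_zero_left] at h
    exact h
  have h11 : ⟪w 1, w 1⟫ = 1 := by
    rw [real_inner_self_eq_norm_sq, hunit 1]; norm_num
  set s : Finset (Fin (d+1)) := (Finset.univ.erase 0).erase 1 with hs
  have h1mem : (1 : Fin (d+1)) ∈ Finset.univ.erase 0 :=
    Finset.mem_erase.2 ⟨fun h => h01 h.symm, Finset.mem_univ _⟩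
  have hsplit : a 0 * ⟪w 0, w 1⟫ + a 1 * ⟪w 1, w 1⟫ + ∑ i ∈ s, a i * ⟪w i, w 1⟫ = 0 := by
    have e0 := (Finset.add_sum_erase Finset.univ (fun i => a i * ⟪w i, w 1⟫)
      (Finset.mem_univ (0 : Fin (d+1))))
    have e1 := (Finset.add_sum_erase (Finset.univ.erase 0)
      (fun i => a i * ⟪w i, w 1⟫) h1mem)
    rw [add_assoc, hs, e1, e0]
    exact key
  have hcard : s.card = d - 1 := by
    rw [hs, Finset.card_erase_of_mem h1mem, Finset.card_erase_of_mem (Finset.mem_univ _),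
      Finset.card_univ, Fintype.card_fin]
    omega
  have hterm : ∀ i ∈ s, -(a 1 / d) ≤ a i * ⟪w i, w 1⟫ := by
    intro i hi
    rw [hs, Finset.mem_erase, Finset.mem_erase] at hi
    obtain ⟨hi1, hi0, -⟩ := hi
    have hiv0 : (i : ℕ) ≠ 0 := fun h => hi0 (Fin.ext (by simp [h]))
    have hiv1 : (i : ℕ) ≠ 1 := fun h => hi1 (Fin.ext (by rw [hv1]; exact h))
    have h1i : (1 : Fin (d+1)) < i := by
      rw [Fin.lt_def, hv1]; omega
    have h1 : -(1/(d:ℝ)) ≤ ⟪w i, w 1⟫ := by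
      rw [real_inner_comm]
      exact hge 1 i (fun h => h01 h.symm) hi0 h1i
    calc -(a 1 / d) ≤ -(a i / d) := by
          have := hmax i
          have : a i / d ≤ a 1 / d := div_le_div_of_nonneg_right (hmax i) hd0.le
          linarith
      _ = a i * (-(1/d)) := by ring
      _ ≤ a i * ⟪w i, w 1⟫ := mul_le_mul_of_nonneg_left h1 (ha i).le
  have hsumlb : ((d:ℝ) - 1) * (-(a 1 / d)) ≤ ∑ i ∈ s, a i * ⟪w i, w 1⟫ := by
    have h := Finset.card_nsmul_le_sum s _ _ hterm
    rw [nsmul_eq_mul, hcard] at h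
    have hc : ((d - 1 : ℕ) : ℝ) = (d:ℝ) - 1 := by
      rw [Nat.cast_sub (by omega)]; norm_num
    rwa [hc] at h
  have hdne : (d:ℝ) ≠ 0 := hd0.ne'
  have hid : ((d:ℝ) - 1) * (-(a 1 / d)) = -(a 1) + a 1 / d := by
    field_simp; ring
  have ha0x : a 0 * ⟪w 0, w 1⟫ ≤ -(a 1 / d) := by
    rw [hid] at hsumlb
    rw [h11] at hsplit
    linarith
  have hfin : a 0 * ⟪w 0, w 1⟫ ≤ a 0 * (-(1/d)) := by
    have h1 : a 0 / d ≤ a 1 / d := div_le_div_of_nonneg_right (hmin 1) hd0.le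
    have : a 0 * (-(1/d)) = -(a 0 / d) := by ring
    linarith
  exact le_of_mul_le_mul_left hfin (ha 0)
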